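/- Let Â ∈ 𝔻^{m×n}, B̂ ∈ 𝔻^{n×s}, Ĉ ∈ 𝔻^{t×m} be dual matrices. (i) A dual matrix X̂ ∈ 𝔻^{n×m} satisfying X̂·Â·X̂ = X̂, ℛ(X̂) = ℛ(B̂) and 𝒩(X̂) = 𝒩(Ĉ) is unique when it exists (denoted Â^{(2)}_{ℛ(B̂),𝒩(Ĉ)}). (ii) The (B̂,Ĉ)-inverse Â^{‖(B̂,Ĉ)} exists if and only if Â^{(2)}_{ℛ(B̂),𝒩(Ĉ)} exists, and in this case Â^{(2)}_{ℛ(B̂),𝒩(Ĉ)} = Â^{‖(B̂,Ĉ)}. -/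

import Mathlib

set_option maxHeartbeats 1000000
set_option synthInstance.maxHeartbeats 400000

open TrivSqZeroExt

/-- The ring of dual numbers over ℝ satisfies Baer's criterion as a module over itself. -/
lemma baerDual : Module.Baer (DualNumber ℝ) (DualNumber ℝ) := by
  intro I g
  by_cases h1 : ∃ x ∈ I, fst x ≠ 0
  · obtain ⟨x, hxI, hx⟩ := h1
    have hu : IsUnit x := isUnit_iff_isUnit_fst.mpr (isUnit_iff_ne_zero.mpr hx)
    have htop : I = ⊤ := Ideal.eq_top_of_isUnit_mem I hxI hu
    have mem1 : (1 : DualNumber ℝ) ∈ I := htop ▸ Submodule.mem_top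
    refine ⟨LinearMap.toSpanSingleton _ _ (g ⟨1, mem1⟩), fun y memy => ?_⟩
    have hy : (⟨y, memy⟩ : I) = y • ⟨1, mem1⟩ := by
      apply Subtype.ext; simp [smul_eq_mul]
    rw [hy, map_smul, LinearMap.toSpanSingleton_apply]
  · push_neg at h1
    by_cases h2 : ∃ x ∈ I, snd x ≠ 0
    · obtain ⟨x, hxI, hb⟩ := h2
      set b : ℝ := snd x with hbdef
      have hxfst : fst x = 0 := h1 x hxI
      set c : DualNumber ℝ := g ⟨x, hxI⟩ with hcdef
      have hxx : x • (⟨x, hxI⟩ : I) = 0 := by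
        apply Subtype.ext
        show x * x = 0
        apply TrivSqZeroExt.ext <;> simp [fst_mul, snd_mul, hxfst]
      have hxc : x * c = 0 := by
        have := map_smul g x ⟨x, hxI⟩
        rw [hxx, map_zero] at this
        exact this.symm
      have hcfst : fst c = 0 := by
        have hsnd := congrArg snd hxc
        simp [snd_mul, hxfst, smul_eq_mul] at hsnd
        rcases hsnd with h | h
        · exact absurd h hb
        · exact h
      refine ⟨LinearMap.toSpanSingleton _ _ (inl (snd c / b)), fun y memy => ?_⟩
      have hyfst : fst y = 0 := h1 y memy
      have hy : (⟨y, memy⟩ : I) = (inl (snd y / b) : DualNumber ℝ) • ⟨x, hxI⟩ := by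
        apply Subtype.ext
        show y = inl (snd y / b) * x
        apply TrivSqZeroExt.ext <;>
          simp [fst_mul, snd_mul, hxfst, hyfst, smul_eq_mul, ← hbdef, div_mul_cancel₀ _ hb]
      rw [hy, map_smul, LinearMap.toSpanSingleton_apply, ← hcdef]
      show y • inl (snd c / b) = inl (snd y / b) • c
      apply TrivSqZeroExt.ext <;>
        simp [smul_eq_mul, fst_mul, snd_mul, hyfst, hcfst, smul_eq_mul]
      ring
    · push_neg at h2
      refine ⟨0, fun y memy => ?_⟩
      have hy : (⟨y, memy⟩ : I) = 0 := by
        apply Subtype.ext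
        apply TrivSqZeroExt.ext
        · exact h1 y memy
        · exact h2 y memy
      rw [hy, map_zero, LinearMap.zero_apply]

/-- Two matrices with the same action by `mulVec` are equal. -/
lemma matrix_ext_mulVec {α : Type*} [CommRing α] {m n : ℕ}
    {P Q : Matrix (Fin m) (Fin n) α}
    (h : ∀ v, P.mulVec v = Q.mulVec v) : P = Q := by
  ext i j
  have h2 := congrFun (h (Pi.single j 1)) i
  rw [Matrix.mulVec_single, Matrix.mulVec_single] at h2
  simpa using h2

/-- If the range (column space) of `P` is contained in that of `Q`, then `P = Q * U`. -/
lemma exists_right_factor {α : Type*} [CommRing α] {n m s : ℕ}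
    (P : Matrix (Fin n) (Fin m) α) (Q : Matrix (Fin n) (Fin s) α)
    (h : ∀ v, ∃ w, P.mulVec v = Q.mulVec w) : ∃ U : Matrix (Fin s) (Fin m) α, P = Q * U := by
  choose w hw using h
  refine ⟨Matrix.of (fun k j => w (Pi.single j 1) k), ?_⟩
  ext i j
  have := congrFun (hw (Pi.single j 1)) i
  simp only [Matrix.mulVec_single_one, Matrix.col_apply, mul_one] at this
  rw [this, Matrix.mul_apply]
  simp [Matrix.mulVec, dotProduct]

/-- Over the dual numbers: if the null space of `C` is contained in the null space of `X`,
then `X = Y * C` for some `Y`.  This uses self-injectivity of the dual numbers. -/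
lemma exists_left_factor {n m t : ℕ} (X : Matrix (Fin n) (Fin m) (DualNumber ℝ))
    (C : Matrix (Fin t) (Fin m) (DualNumber ℝ))
    (h : ∀ v, C.mulVec v = 0 → X.mulVec v = 0) :
    ∃ Y : Matrix (Fin n) (Fin t) (DualNumber ℝ), X = Y * C := by
  set fC := C.mulVecLin with hfC
  set fX := X.mulVecLin with hfX
  have hker : LinearMap.ker fC ≤ LinearMap.ker fX := fun v hv => by
    rw [LinearMap.mem_ker] at *
    exact h v hv
  set p := LinearMap.ker fC with hp
  set ι : ((Fin m → DualNumber ℝ) ⧸ p) →ₗ[DualNumber ℝ] (Fin t → DualNumber ℝ) :=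
    p.liftQ fC le_rfl with hι
  have hinj : Function.Injective ι :=
    LinearMap.ker_eq_bot.mp (Submodule.ker_liftQ_eq_bot p fC le_rfl le_rfl)
  set fbar : ((Fin m → DualNumber ℝ) ⧸ p) →ₗ[DualNumber ℝ] (Fin n → DualNumber ℝ) :=
    p.liftQ fX hker with hfbar
  have hext : ∀ i : Fin n, ∃ gi : (Fin t → DualNumber ℝ) →ₗ[DualNumber ℝ] DualNumber ℝ,
      gi ∘ₗ ι = (LinearMap.proj i) ∘ₗ fbar := fun i =>
    baerDual.extension_property ι hinj _
  choose gi hgi using hext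
  set g : (Fin t → DualNumber ℝ) →ₗ[DualNumber ℝ] (Fin n → DualNumber ℝ) :=
    LinearMap.pi gi with hg
  refine ⟨LinearMap.toMatrix' g, ?_⟩
  apply matrix_ext_mulVec
  intro v
  rw [← Matrix.mulVec_mulVec]
  have h1 : (LinearMap.toMatrix' g).mulVec (C.mulVec v) = g (C.mulVec v) := by
    rw [← Matrix.toLin'_apply, Matrix.toLin'_toMatrix']
  rw [h1]
  have h2 : ι (p.mkQ v) = C.mulVec v := by
    rw [Submodule.mkQ_apply, hι, Submodule.liftQ_apply]; rfl
  have h3 : fbar (p.mkQ v) = X.mulVec v := by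
    rw [Submodule.mkQ_apply, hfbar, Submodule.liftQ_apply]; rfl
  funext i
  have h4 := congrFun (congrArg DFunLike.coe (hgi i)) (p.mkQ v)
  simp only [LinearMap.comp_apply, LinearMap.proj_apply] at h4
  calc X.mulVec v i = fbar (p.mkQ v) i := by rw [h3]
    _ = gi i (ι (p.mkQ v)) := h4.symm
    _ = gi i (C.mulVec v) := by rw [h2]
    _ = g (C.mulVec v) i := rfl


/-- `X` is the (B,C)-inverse of `A` (for rectangular matrices over a ring `α`):
`C·A·X = C`, `X·A·B = B`, `X = B·Y₁ = Y₂·C` for some `Y₁, Y₂`. -/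
def IsBCInvM {α : Type*} [Ring α] {m n s t : ℕ}
    (B : Matrix (Fin n) (Fin s) α) (C : Matrix (Fin t) (Fin m) α)
    (A : Matrix (Fin m) (Fin n) α) (X : Matrix (Fin n) (Fin m) α) : Prop :=
  C * A * X = C ∧ X * A * B = B ∧
    (∃ Y₁ : Matrix (Fin s) (Fin m) α, X = B * Y₁) ∧
    (∃ Y₂ : Matrix (Fin n) (Fin t) α, X = Y₂ * C)

/-- `X` is a {2}-inverse of `Â` with range `ℛ(B̂)` and null space `𝒩(Ĉ)`. -/
def IsOuterRangeNull {m n s t : ℕ}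
    (A : Matrix (Fin m) (Fin n) (DualNumber ℝ))
    (B : Matrix (Fin n) (Fin s) (DualNumber ℝ))
    (C : Matrix (Fin t) (Fin m) (DualNumber ℝ))
    (X : Matrix (Fin n) (Fin m) (DualNumber ℝ)) : Prop :=
  X * A * X = X ∧
  {v : Fin n → DualNumber ℝ | ∃ α, v = X.mulVec α} =
    {v : Fin n → DualNumber ℝ | ∃ α, v = B.mulVec α} ∧
  {β : Fin m → DualNumber ℝ | X.mulVec β = 0} =
    {β : Fin m → DualNumber ℝ | C.mulVec β = 0}

lemma bc_to_outer {m n s t : ℕ}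
    {A : Matrix (Fin m) (Fin n) (DualNumber ℝ)}
    {B : Matrix (Fin n) (Fin s) (DualNumber ℝ)}
    {C : Matrix (Fin t) (Fin m) (DualNumber ℝ)}
    {X : Matrix (Fin n) (Fin m) (DualNumber ℝ)}
    (h : IsBCInvM B C A X) : IsOuterRangeNull A B C X := by
  obtain ⟨hC, hB, ⟨Y₁, hY₁⟩, ⟨Y₂, hY₂⟩⟩ := h
  refine ⟨?_, ?_, ?_⟩
  · calc X * A * X = X * A * (B * Y₁) := by rw [← hY₁]
      _ = (X * A * B) * Y₁ := by simp only [Matrix.mul_assoc]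
      _ = B * Y₁ := by rw [hB]
      _ = X := hY₁.symm
  · ext v
    simp only [Set.mem_setOf_eq]
    constructor
    · rintro ⟨α, rfl⟩
      exact ⟨Y₁.mulVec α, by rw [hY₁, ← Matrix.mulVec_mulVec]⟩
    · rintro ⟨α, rfl⟩
      refine ⟨(A * B).mulVec α, ?_⟩
      rw [Matrix.mulVec_mulVec, ← Matrix.mul_assoc, hB]
  · ext v
    simp only [Set.mem_setOf_eq]
    constructor
    · intro hv
      have : (C * A * X).mulVec v = C.mulVec v := by rw [hC]
      rw [← Matrix.mulVec_mulVec, hv, Matrix.mulVec_zero] at this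
      exact this.symm
    · intro hv
      rw [hY₂, ← Matrix.mulVec_mulVec, hv, Matrix.mulVec_zero]

lemma outer_to_bc {m n s t : ℕ}
    {A : Matrix (Fin m) (Fin n) (DualNumber ℝ)}
    {B : Matrix (Fin n) (Fin s) (DualNumber ℝ)}
    {C : Matrix (Fin t) (Fin m) (DualNumber ℝ)}
    {X : Matrix (Fin n) (Fin m) (DualNumber ℝ)}
    (h : IsOuterRangeNull A B C X) : IsBCInvM B C A X := by
  obtain ⟨hXAX, hR, hN⟩ := h
  have hXB : ∀ v, ∃ w, X.mulVec v = B.mulVec w := fun v => by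
    have hv : X.mulVec v ∈ {u : Fin n → DualNumber ℝ | ∃ α, u = X.mulVec α} := ⟨v, rfl⟩
    rw [hR] at hv
    obtain ⟨w, hw⟩ := hv
    exact ⟨w, hw⟩
  have hBX : ∀ v, ∃ w, B.mulVec v = X.mulVec w := fun v => by
    have hv : B.mulVec v ∈ {u : Fin n → DualNumber ℝ | ∃ α, u = B.mulVec α} := ⟨v, rfl⟩
    rw [← hR] at hv
    obtain ⟨w, hw⟩ := hv
    exact ⟨w, hw⟩
  obtain ⟨Y₁, hY₁⟩ := exists_right_factor X B hXB
  obtain ⟨W, hW⟩ := exists_right_factor B X hBX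
  have hNle : ∀ v, C.mulVec v = 0 → X.mulVec v = 0 := fun v hv => by
    have : v ∈ {β : Fin m → DualNumber ℝ | C.mulVec β = 0} := hv
    rw [← hN] at this
    exact this
  obtain ⟨Y₂, hY₂⟩ := exists_left_factor X C hNle
  refine ⟨?_, ?_, ⟨Y₁, hY₁⟩, ⟨Y₂, hY₂⟩⟩
  · apply matrix_ext_mulVec
    intro v
    have hx : X.mulVec (A.mulVec (X.mulVec v) - v) = 0 := by
      rw [Matrix.mulVec_sub, Matrix.mulVec_mulVec, Matrix.mulVec_mulVec, hXAX,
        sub_self]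
    have hc : C.mulVec (A.mulVec (X.mulVec v) - v) = 0 := by
      have : (A.mulVec (X.mulVec v) - v) ∈ {β : Fin m → DualNumber ℝ | X.mulVec β = 0} := hx
      rw [hN] at this
      exact this
    rw [Matrix.mulVec_sub] at hc
    have := sub_eq_zero.mp hc
    rw [← Matrix.mulVec_mulVec, ← Matrix.mulVec_mulVec]
    exact this
  · calc X * A * B = X * A * (X * W) := by rw [← hW]
      _ = (X * A * X) * W := by simp only [Matrix.mul_assoc]
      _ = X * W := by rw [hXAX]
      _ = B := hW.symm

lemma outer_uniq {m n s t : ℕ}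
    {A : Matrix (Fin m) (Fin n) (DualNumber ℝ)}
    {B : Matrix (Fin n) (Fin s) (DualNumber ℝ)}
    {C : Matrix (Fin t) (Fin m) (DualNumber ℝ)}
    {X₁ X₂ : Matrix (Fin n) (Fin m) (DualNumber ℝ)}
    (h1 : IsOuterRangeNull A B C X₁) (h2 : IsOuterRangeNull A B C X₂) : X₁ = X₂ := by
  obtain ⟨hXAX1, hR1, hN1⟩ := h1
  obtain ⟨hXAX2, hR2, hN2⟩ := h2
  have hle : ∀ v, ∃ w, X₁.mulVec v = X₂.mulVec w := fun v => by
    have hv : X₁.mulVec v ∈ {u : Fin n → DualNumber ℝ | ∃ α, u = X₁.mulVec α} := ⟨v, rfl⟩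
    rw [hR1, ← hR2] at hv
    obtain ⟨w, hw⟩ := hv
    exact ⟨w, hw⟩
  obtain ⟨U, hU⟩ := exists_right_factor X₁ X₂ hle
  have e1 : X₂ * A * X₁ = X₁ := by
    calc X₂ * A * X₁ = X₂ * A * (X₂ * U) := by rw [← hU]
      _ = (X₂ * A * X₂) * U := by simp only [Matrix.mul_assoc]
      _ = X₂ * U := by rw [hXAX2]
      _ = X₁ := hU.symm
  have e2 : X₂ * A * X₁ = X₂ := by
    apply matrix_ext_mulVec
    intro v
    have hx : X₁.mulVec (A.mulVec (X₁.mulVec v) - v) = 0 := by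
      rw [Matrix.mulVec_sub, Matrix.mulVec_mulVec, Matrix.mulVec_mulVec, hXAX1,
        sub_self]
    have hx2 : X₂.mulVec (A.mulVec (X₁.mulVec v) - v) = 0 := by
      have : (A.mulVec (X₁.mulVec v) - v) ∈ {β : Fin m → DualNumber ℝ | X₁.mulVec β = 0} := hx
      rw [hN1, ← hN2] at this
      exact this
    rw [Matrix.mulVec_sub] at hx2
    have := sub_eq_zero.mp hx2
    rw [← Matrix.mulVec_mulVec, ← Matrix.mulVec_mulVec]
    exact this
  rw [← e1, e2]


/-- (i) a dual matrix `X̂` with `X̂ Â X̂ = X̂`, `ℛ(X̂) = ℛ(B̂)` and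
`𝒩(X̂) = 𝒩(Ĉ)` is unique when it exists; (ii) `Â^{‖(B̂,Ĉ)}` exists iff
`Â^{(2)}_{ℛ(B̂),𝒩(Ĉ)}` exists, and then they coincide. -/
theorem stmt18 {m n s t : ℕ}
    (A : Matrix (Fin m) (Fin n) (DualNumber ℝ))
    (B : Matrix (Fin n) (Fin s) (DualNumber ℝ))
    (C : Matrix (Fin t) (Fin m) (DualNumber ℝ)) :
    (∀ X₁ X₂ : Matrix (Fin n) (Fin m) (DualNumber ℝ),
      IsOuterRangeNull A B C X₁ → IsOuterRangeNull A B C X₂ → X₁ = X₂) ∧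
    ((∃ X, IsBCInvM B C A X) ↔ (∃ X, IsOuterRangeNull A B C X)) ∧
    (∀ X Y : Matrix (Fin n) (Fin m) (DualNumber ℝ),
      IsOuterRangeNull A B C X → IsBCInvM B C A Y → X = Y) := by
  refine ⟨fun X₁ X₂ h1 h2 => outer_uniq h1 h2,
    ⟨fun ⟨X, hX⟩ => ⟨X, bc_to_outer hX⟩, fun ⟨X, hX⟩ => ⟨X, outer_to_bc hX⟩⟩,
    fun X Y hX hY => outer_uniq hX (bc_to_outer hY)⟩
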